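/- Let D be a linear series of dimension r and degree d on a smooth projective curve X over an algebraically closed field, and let P ≠ Q be points of X with (D,P)-orders j₀(P) < ... < j_r(P) and (D,Q)-orders j₀(Q) < ... < j_r(Q). Then for every i with 0 ≤ i ≤ r, j_i(P) + j_{r-i}(Q) ≤ d. -/

import Mathlib

/-- Ultrametric bound for finite sums. -/
lemma aux_val_sum {K : Type*} [Field K] (w : K → ℤ)
    (hwadd : ∀ f g : K, f ≠ 0 → g ≠ 0 → f + g ≠ 0 → min (w f) (w g) ≤ w (f + g))
    {ι : Type*} (m : ℤ) (s : Finset ι) (g : ι → K)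
    (h0 : ∀ i ∈ s, g i ≠ 0) (hm : ∀ i ∈ s, m ≤ w (g i))
    (hs : ∑ i ∈ s, g i ≠ 0) : m ≤ w (∑ i ∈ s, g i) := by
  classical
  induction s using Finset.induction with
  | empty => simp at hs
  | @insert a t ha ih =>
    rw [Finset.sum_insert ha] at hs ⊢
    by_cases ht : ∑ i ∈ t, g i = 0
    · rw [ht, add_zero]
      exact hm a (Finset.mem_insert_self a t)
    · refine le_trans (le_min (hm a (Finset.mem_insert_self a t)) ?_)
        (hwadd _ _ (h0 a (Finset.mem_insert_self a t)) ht hs)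
      exact ih (fun i hi => h0 i (Finset.mem_insert_of_mem hi))
        (fun i hi => hm i (Finset.mem_insert_of_mem hi)) ht

section
variable {F K : Type*} [Field F] [Field K] [Algebra F K] (w : K → ℤ)
  (hwmul : ∀ f g : K, f ≠ 0 → g ≠ 0 → w (f * g) = w f + w g)
  (hwadd : ∀ f g : K, f ≠ 0 → g ≠ 0 → f + g ≠ 0 → min (w f) (w g) ≤ w (f + g))
  (hwconst : ∀ c : F, c ≠ 0 → w (algebraMap F K c) = 0)

include hwmul hwconst in
lemma aux_val_smul (c : F) (g : K) (hc : c ≠ 0) (hg : g ≠ 0) : w (c • g) = w g := by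
  rw [Algebra.smul_def, hwmul _ _ ((map_ne_zero _).mpr hc) hg, hwconst c hc, zero_add]

include hwmul hwadd hwconst in
/-- Any nonzero element of the span of elements of valuation `≥ m` has valuation `≥ m`. -/
lemma aux_val_span {ι : Type*} [Fintype ι] (f : ι → K) (hne : ∀ i, f i ≠ 0)
    (m : ℤ) (hm : ∀ i, m ≤ w (f i)) {h : K} (hh : h ≠ 0)
    (hmem : h ∈ Submodule.span F (Set.range f)) : m ≤ w h := by
  classical
  obtain ⟨c, hc⟩ := (Submodule.mem_span_range_iff_exists_fun F).mp hmem
  have hfilt : ∑ i ∈ Finset.univ.filter (fun i => c i ≠ 0), c i • f i = h := by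
    rw [← hc]
    apply Finset.sum_subset (Finset.filter_subset _ _)
    intro x _ hx
    simp only [Finset.mem_filter, Finset.mem_univ, true_and, not_not] at hx
    simp [hx]
  rw [← hfilt]
  apply aux_val_sum w hwadd
  · intro i hi
    simp only [Finset.mem_filter] at hi
    exact smul_ne_zero hi.2 (hne i)
  · intro i hi
    simp only [Finset.mem_filter] at hi
    rw [aux_val_smul w hwmul hwconst _ _ hi.2 (hne i)]
    exact hm i
  · rw [hfilt]; exact hh

include hwmul hwadd hwconst in
/-- Elements with strictly increasing valuations are linearly independent. -/
lemma aux_val_indep {ι : Type*} [Fintype ι] [LinearOrder ι] (f : ι → K)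
    (hne : ∀ i, f i ≠ 0) (hmono : StrictMono (fun i => w (f i))) :
    LinearIndependent F f := by
  classical
  rw [Fintype.linearIndependent_iff]
  intro c hc
  by_contra hcon
  push_neg at hcon
  obtain ⟨i₀, hi₀⟩ := hcon
  set S := Finset.univ.filter (fun i => c i ≠ 0) with hS
  have hSne : S.Nonempty := ⟨i₀, by simp [hS, hi₀]⟩
  set k := S.min' hSne with hk
  have hkS : k ∈ S := S.min'_mem hSne
  have hck : c k ≠ 0 := by simpa [hS] using hkS
  have hsumS : ∑ i ∈ S, c i • f i = 0 := by
    rw [← hc]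
    apply Finset.sum_subset (Finset.subset_univ S)
    intro x _ hx
    simp only [hS, Finset.mem_filter, Finset.mem_univ, true_and, not_not] at hx
    simp [hx]
  rw [← Finset.add_sum_erase S _ hkS] at hsumS
  have herase : ∑ i ∈ S.erase k, c i • f i = -(c k • f k) := by linear_combination hsumS
  have hckfk : c k • f k ≠ 0 := smul_ne_zero hck (hne k)
  have hne' : ∑ i ∈ S.erase k, c i • f i ≠ 0 := by
    rw [herase]; exact neg_ne_zero.mpr hckfk
  have hbound : w (f k) + 1 ≤ w (∑ i ∈ S.erase k, c i • f i) := by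
    apply aux_val_sum w hwadd
    · intro i hi
      simp only [Finset.mem_erase, hS, Finset.mem_filter] at hi
      exact smul_ne_zero hi.2.2 (hne i)
    · intro i hi
      have hik : i ≠ k := (Finset.mem_erase.mp hi).1
      have hiS : i ∈ S := (Finset.mem_erase.mp hi).2
      have hci : c i ≠ 0 := by simpa [hS] using hiS
      have hki : k < i := lt_of_le_of_ne (S.min'_le i hiS) (Ne.symm hik)
      rw [aux_val_smul w hwmul hwconst _ _ hci (hne i)]
      exact Int.add_one_le_iff.mpr (hmono hki)
    · exact hne'
  have hneg : w (-(c k • f k)) = w (f k) := by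
    have : -(c k • f k) = ((-1 : F) • (c k • f k)) := by simp
    rw [this, aux_val_smul w hwmul hwconst _ _ (by norm_num) hckfk,
      aux_val_smul w hwmul hwconst _ _ hck (hne k)]
  rw [herase, hneg] at hbound
  omega

end

/-- Esteves–Homma (Lemma 1.51). -/
theorem stmt19 (F K : Type*) [Field F] [Field K] [Algebra F K]
    (X : Type*) (v : X → K → ℤ)
    (hvmul : ∀ (x : X) (f g : K), f ≠ 0 → g ≠ 0 → v x (f * g) = v x f + v x g)
    (hvadd : ∀ (x : X) (f g : K), f ≠ 0 → g ≠ 0 → f + g ≠ 0 →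
      min (v x f) (v x g) ≤ v x (f + g))
    (hvconst : ∀ (x : X) (c : F), c ≠ 0 → v x (algebraMap F K c) = 0)
    (hres : ∀ (x : X) (f g : K), f ≠ 0 → g ≠ 0 → v x f = v x g →
      ∃ c : F, f - c • g = 0 ∨ v x f < v x (f - c • g))
    (E : X → ℤ) (d r : ℕ) (D' : Subspace F K)
    (hdim : Module.finrank F D' = r + 1)
    (heff : ∀ f ∈ D', f ≠ 0 → ∀ x : X, 0 ≤ E x + v x f)
    (hdeg : ∀ f ∈ D', f ≠ 0 → ∃ s : Finset X,
      (∀ x ∉ s, E x + v x f = 0) ∧ ∑ x ∈ s, (E x + v x f) = (d : ℤ))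
    (P Q : X) (hPQ : P ≠ Q)
    (jP jQ : Fin (r + 1) → ℕ) (hjPmono : StrictMono jP) (hjQmono : StrictMono jQ)
    (hjP : ∀ m : ℕ, (∃ i, jP i = m) ↔ ∃ f ∈ D', f ≠ 0 ∧ E P + v P f = (m : ℤ))
    (hjQ : ∀ m : ℕ, (∃ i, jQ i = m) ↔ ∃ f ∈ D', f ≠ 0 ∧ E Q + v Q f = (m : ℤ)) :
    ∀ i : Fin (r + 1), jP i + jQ i.rev ≤ d := by
  classical
  intro i₀
  -- choose representatives of each order at P and Q
  have hexP : ∀ i : Fin (r + 1), ∃ f, f ∈ D' ∧ f ≠ 0 ∧ E P + v P f = (jP i : ℤ) := by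
    intro i
    obtain ⟨f, h1, h2, h3⟩ := (hjP (jP i)).mp ⟨i, rfl⟩
    exact ⟨f, h1, h2, h3⟩
  have hexQ : ∀ i : Fin (r + 1), ∃ f, f ∈ D' ∧ f ≠ 0 ∧ E Q + v Q f = (jQ i : ℤ) := by
    intro i
    obtain ⟨f, h1, h2, h3⟩ := (hjQ (jQ i)).mp ⟨i, rfl⟩
    exact ⟨f, h1, h2, h3⟩
  choose fP hfPmem hfPne hfPval using hexP
  choose fQ hfQmem hfQne hfQval using hexQ
  -- linear independence
  have hPind : LinearIndependent F fP := by
    apply aux_val_indep (v P) (hvmul P) (hvadd P) (hvconst P) fP hfPne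
    intro a b hab
    have h1 := hfPval a
    have h2 := hfPval b
    have h3 := hjPmono hab
    show v P (fP a) < v P (fP b)
    omega
  have hQind : LinearIndependent F fQ := by
    apply aux_val_indep (v Q) (hvmul Q) (hvadd Q) (hvconst Q) fQ hfQne
    intro a b hab
    have h1 := hfQval a
    have h2 := hfQval b
    have h3 := hjQmono hab
    show v Q (fQ a) < v Q (fQ b)
    omega
  -- the two subspaces
  set gP : Set.Ici i₀ → K := fun j => fP j.1 with hgP
  set gQ : Set.Ici i₀.rev → K := fun j => fQ j.1 with hgQ
  have hgPind : LinearIndependent F gP := hPind.comp _ Subtype.val_injective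
  have hgQind : LinearIndependent F gQ := hQind.comp _ Subtype.val_injective
  set A : Submodule F K := Submodule.span F (Set.range gP) with hA
  set B : Submodule F K := Submodule.span F (Set.range gQ) with hB
  have hAfin : FiniteDimensional F A := FiniteDimensional.span_of_finite F (Set.finite_range _)
  have hBfin : FiniteDimensional F B := FiniteDimensional.span_of_finite F (Set.finite_range _)
  have hArank : Module.finrank F A = r + 1 - i₀.1 := by
    rw [hA, finrank_span_eq_card hgPind, Fintype.card_Ici, Fin.card_Ici]
  have hBrank : Module.finrank F B = i₀.1 + 1 := by
    rw [hB, finrank_span_eq_card hgQind, Fintype.card_Ici, Fin.card_Ici, Fin.val_rev]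
    omega
  have hAD : A ≤ D' := Submodule.span_le.mpr (by rintro _ ⟨j, rfl⟩; exact hfPmem j.1)
  have hBD : B ≤ D' := Submodule.span_le.mpr (by rintro _ ⟨j, rfl⟩; exact hfQmem j.1)
  have hDfin : FiniteDimensional F D' :=
    FiniteDimensional.of_finrank_pos (by omega)
  have hsup : Module.finrank F ↥(A ⊔ B) ≤ r + 1 := by
    rw [← hdim]
    exact Submodule.finrank_mono (sup_le hAD hBD)
  have hinf : 0 < Module.finrank F ↥(A ⊓ B) := by
    have := Submodule.finrank_sup_add_finrank_inf_eq A B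
    have hi₀ : i₀.1 ≤ r := by omega
    omega
  -- pick a nonzero element of the intersection
  have : Nontrivial ↥(A ⊓ B) := Module.nontrivial_of_finrank_pos hinf
  obtain ⟨⟨h, hhmem⟩, hh0⟩ := exists_ne (0 : ↥(A ⊓ B))
  have hhne : h ≠ 0 := fun h0 => hh0 (Subtype.ext h0)
  have hhA : h ∈ A := hhmem.1
  have hhB : h ∈ B := hhmem.2
  have hhD : h ∈ D' := hAD hhA
  -- valuation bounds
  have hPb : (jP i₀ : ℤ) - E P ≤ v P h := by
    apply aux_val_span (v P) (hvmul P) (hvadd P) (hvconst P) gP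
      (fun j => hfPne j.1) _ _ hhne hhA
    intro j
    have := hfPval j.1
    have hmono := hjPmono.monotone j.2
    simp only [hgP]; omega
  have hQb : (jQ i₀.rev : ℤ) - E Q ≤ v Q h := by
    apply aux_val_span (v Q) (hvmul Q) (hvadd Q) (hvconst Q) gQ
      (fun j => hfQne j.1) _ _ hhne hhB
    intro j
    have := hfQval j.1
    have hmono := hjQmono.monotone j.2
    simp only [hgQ]; omega
  -- degree computation
  obtain ⟨s, hs0, hsd⟩ := hdeg h hhD hhne
  set s' : Finset X := insert P (insert Q s) with hs'
  have hsum' : ∑ x ∈ s', (E x + v x h) = (d : ℤ) := by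
    rw [← hsd]
    exact (Finset.sum_subset (by intro x hx; simp [hs', hx])
      (fun x _ hxs => hs0 x hxs)).symm
  have hPmem : P ∈ s' := by simp [hs']
  have hQmem : Q ∈ s'.erase P := by simp [hs', Ne.symm hPQ]
  rw [← Finset.add_sum_erase _ _ hPmem, ← Finset.add_sum_erase _ _ hQmem] at hsum'
  have hrest : 0 ≤ ∑ x ∈ (s'.erase P).erase Q, (E x + v x h) :=
    Finset.sum_nonneg (fun x _ => heff h hhD hhne x)
  have : (jP i₀ : ℤ) + (jQ i₀.rev : ℤ) ≤ (d : ℤ) := by omega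
  exact_mod_cast this
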